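/- (Birkhoff) Let G = (U, V, E) be a finite bipartite graph and let P ⊆ ℝ^E be the polytope of all x : E → ℝ with x ≥ 0, Σ_{j : (i,j) ∈ E} x(i,j) ≤ 1 for every i ∈ U, and Σ_{i : (i,j) ∈ E} x(i,j) ≤ 1 for every j ∈ V. Then the extreme points of P are exactly the 0/1 indicator vectors of matchings of G. -/

import Mathlib

open scoped Classical

/-- A matching in the bipartite graph with edge set `E ⊆ U × V`. -/
def IsBipMatching {U V : Type*} (E : Finset (U × V)) (M : Finset (U × V)) : Prop :=
  M ⊆ E ∧ ∀ e ∈ M, ∀ f ∈ M, e ≠ f → e.1 ≠ f.1 ∧ e.2 ≠ f.2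


lemma exists_eps {α : Type*} (s : Finset α) (a b : α → ℝ) (hb : ∀ i ∈ s, 0 < b i) :
    ∃ ε : ℝ, 0 < ε ∧ ∀ i ∈ s, ε * a i ≤ b i := by
  classical
  induction s using Finset.induction_on with
  | empty => exact ⟨1, one_pos, by simp⟩
  | @insert i s hi ih =>
    obtain ⟨ε, hε, hεs⟩ := ih (fun j hj => hb j (Finset.mem_insert_of_mem hj))
    have hbi : 0 < b i := hb i (Finset.mem_insert_self i s)
    have hm : (0:ℝ) < max 1 (a i) := lt_max_of_lt_left one_pos
    have hε' : 0 < min ε (b i / max 1 (a i)) := lt_min hε (div_pos hbi hm)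
    refine ⟨min ε (b i / max 1 (a i)), hε', ?_⟩
    intro j hj
    rcases le_or_gt (a j) 0 with haj | haj
    · have : min ε (b i / max 1 (a i)) * a j ≤ 0 := mul_nonpos_of_nonneg_of_nonpos hε'.le haj
      linarith [hb j hj]
    rcases Finset.mem_insert.1 hj with rfl | hj
    · calc min ε (b j / max 1 (a j)) * a j ≤ (b j / max 1 (a j)) * a j :=
            mul_le_mul_of_nonneg_right (min_le_right _ _) haj.le
      _ ≤ (b j / max 1 (a j)) * max 1 (a j) :=
            mul_le_mul_of_nonneg_left (le_max_right _ _) (div_pos hbi hm).le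
      _ = b j := div_mul_cancel₀ _ (ne_of_gt hm)
    · calc min ε (b i / max 1 (a i)) * a j ≤ ε * a j :=
            mul_le_mul_of_nonneg_right (min_le_left _ _) haj.le
      _ ≤ b j := hεs j hj



open Finset Module

set_option maxHeartbeats 1000000 in
lemma exists_kernel_vec {ι α β : Type*} [Fintype ι] [DecidableEq α] [DecidableEq β]
    (p : ι → α) (q : ι → β) (F : Finset ι) (hF : F.Nonempty)
    (WU : Finset α) (WV : Finset β)
    (hWU : ∀ a ∈ WU, 2 ≤ (F.filter (fun e => p e = a)).card)
    (hWV : ∀ b ∈ WV, 2 ≤ (F.filter (fun e => q e = b)).card) :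
    ∃ d : ι → ℝ, d ≠ 0 ∧ (∀ e, e ∉ F → d e = 0) ∧
      (∀ a ∈ WU, ∑ e ∈ F.filter (fun e => p e = a), d e = 0) ∧
      (∀ b ∈ WV, ∑ e ∈ F.filter (fun e => q e = b), d e = 0) := by
  classical
  have hfibU : ∀ a ∈ WU, (F.filter (fun e => p e ∈ WU)).filter (fun e => p e = a)
      = F.filter (fun e => p e = a) := by
    intro a ha
    rw [Finset.filter_filter]
    apply Finset.filter_congr
    intro e _
    exact ⟨fun h => h.2, fun h => ⟨h ▸ ha, h⟩⟩
  have hfibV : ∀ b ∈ WV, (F.filter (fun e => q e ∈ WV)).filter (fun e => q e = b)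
      = F.filter (fun e => q e = b) := by
    intro b hb
    rw [Finset.filter_filter]
    apply Finset.filter_congr
    intro e _
    exact ⟨fun h => h.2, fun h => ⟨h ▸ hb, h⟩⟩
  have hsU : (F.filter (fun e => p e ∈ WU)).card
      = ∑ a ∈ WU, (F.filter (fun e => p e = a)).card := by
    rw [Finset.card_eq_sum_card_fiberwise (f := p) (s := F.filter (fun e => p e ∈ WU)) (t := WU)
      (fun e he => (Finset.mem_filter.1 he).2)]
    exact Finset.sum_congr rfl fun a ha => by rw [hfibU a ha]
  have hsV : (F.filter (fun e => q e ∈ WV)).card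
      = ∑ b ∈ WV, (F.filter (fun e => q e = b)).card := by
    rw [Finset.card_eq_sum_card_fiberwise (f := q) (s := F.filter (fun e => q e ∈ WV)) (t := WV)
      (fun e he => (Finset.mem_filter.1 he).2)]
    exact Finset.sum_congr rfl fun b hb => by rw [hfibV b hb]
  have h2U : 2 * WU.card ≤ (F.filter (fun e => p e ∈ WU)).card := by
    rw [hsU, mul_comm]
    calc WU.card * 2 = ∑ _a ∈ WU, 2 := by rw [Finset.sum_const, smul_eq_mul]
    _ ≤ _ := Finset.sum_le_sum hWU
  have h2V : 2 * WV.card ≤ (F.filter (fun e => q e ∈ WV)).card := by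
    rw [hsV, mul_comm]
    calc WV.card * 2 = ∑ _b ∈ WV, 2 := by rw [Finset.sum_const, smul_eq_mul]
    _ ≤ _ := Finset.sum_le_sum hWV
  have hU' : (F.filter (fun e => p e ∈ WU)).card ≤ F.card := Finset.card_filter_le _ _
  have hV' : (F.filter (fun e => q e ∈ WV)).card ≤ F.card := Finset.card_filter_le _ _
  by_contra hcon
  push_neg at hcon
  set ΦU : ({e // e ∈ F} → ℝ) →ₗ[ℝ] ({a // a ∈ WU} → ℝ) :=
    { toFun := fun d a => ∑ e ∈ Finset.univ.filter (fun e : {e // e ∈ F} => p e.1 = a.1), d e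
      map_add' := by
        intro d d'; funext a; simp only [Pi.add_apply]; exact Finset.sum_add_distrib
      map_smul' := by
        intro c d; funext a
        simp only [Pi.smul_apply, smul_eq_mul, RingHom.id_apply]
        exact (Finset.mul_sum _ _ _).symm } with hΦU
  set ΦV : ({e // e ∈ F} → ℝ) →ₗ[ℝ] ({b // b ∈ WV} → ℝ) :=
    { toFun := fun d b => ∑ e ∈ Finset.univ.filter (fun e : {e // e ∈ F} => q e.1 = b.1), d e
      map_add' := by
        intro d d'; funext b; simp only [Pi.add_apply]; exact Finset.sum_add_distrib
      map_smul' := by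
        intro c d; funext b
        simp only [Pi.smul_apply, smul_eq_mul, RingHom.id_apply]
        exact (Finset.mul_sum _ _ _).symm } with hΦV
  set Φ : ({e // e ∈ F} → ℝ) →ₗ[ℝ] (({a // a ∈ WU} → ℝ) × ({b // b ∈ WV} → ℝ)) :=
    ΦU.prod ΦV with hΦ
  -- translation between sums
  have htransU : ∀ (d : {e // e ∈ F} → ℝ) (g : ι → ℝ), (∀ e : {e // e ∈ F}, g e.1 = d e) →
      ∀ a : α, ∑ e ∈ F.filter (fun e => p e = a), g e
        = ∑ e ∈ Finset.univ.filter (fun e : {e // e ∈ F} => p e.1 = a), d e := by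
    intro d g hg a
    rw [Finset.sum_filter, Finset.sum_filter, Finset.univ_eq_attach,
      ← Finset.sum_attach F (fun e => if p e = a then g e else 0)]
    refine Finset.sum_congr rfl ?_
    intro e _
    by_cases h : p e.1 = a
    · rw [if_pos h, if_pos h, hg e]
    · rw [if_neg h, if_neg h]
  have htransV : ∀ (d : {e // e ∈ F} → ℝ) (g : ι → ℝ), (∀ e : {e // e ∈ F}, g e.1 = d e) →
      ∀ b : β, ∑ e ∈ F.filter (fun e => q e = b), g e
        = ∑ e ∈ Finset.univ.filter (fun e : {e // e ∈ F} => q e.1 = b), d e := by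
    intro d g hg b
    rw [Finset.sum_filter, Finset.sum_filter, Finset.univ_eq_attach,
      ← Finset.sum_attach F (fun e => if q e = b then g e else 0)]
    refine Finset.sum_congr rfl ?_
    intro e _
    by_cases h : q e.1 = b
    · rw [if_pos h, if_pos h, hg e]
    · rw [if_neg h, if_neg h]
  have hinj : Function.Injective Φ := by
    rw [injective_iff_map_eq_zero]
    intro d hd0
    by_contra hdne
    set dext : ι → ℝ := fun e => if h : e ∈ F then d ⟨e, h⟩ else 0 with hdext
    have hgd : ∀ e : {e // e ∈ F}, dext e.1 = d e := by
      intro e; rw [hdext]; exact dif_pos e.2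
    have hne : dext ≠ 0 := by
      intro h0
      apply hdne
      funext e
      show d e = 0
      rw [← hgd e]
      rw [h0]
      rfl
    have hsupp : ∀ e, e ∉ F → dext e = 0 := fun e he => dif_neg he
    have hrows : ∀ a ∈ WU, ∑ e ∈ F.filter (fun e => p e = a), dext e = 0 := by
      intro a ha
      rw [htransU d dext hgd a]
      exact congrFun (congrArg Prod.fst hd0) ⟨a, ha⟩
    obtain ⟨b, hb, hbne⟩ := hcon dext hne hsupp hrows
    apply hbne
    rw [htransV d dext hgd b]
    exact congrFun (congrArg Prod.snd hd0) ⟨b, hb⟩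
  have hrankD : finrank ℝ ({e // e ∈ F} → ℝ) = F.card := by
    rw [Module.finrank_fintype_fun_eq_card, Fintype.card_coe]
  have hrankC : finrank ℝ (({a // a ∈ WU} → ℝ) × ({b // b ∈ WV} → ℝ))
      = WU.card + WV.card := by
    rw [Module.finrank_prod, Module.finrank_fintype_fun_eq_card,
      Module.finrank_fintype_fun_eq_card, Fintype.card_coe, Fintype.card_coe]
  have hrankle : F.card ≤ WU.card + WV.card := by
    have h := LinearMap.finrank_le_finrank_of_injective hinj
    rw [hrankD, hrankC] at h
    exact h
  have hNF : 0 < F.card := hF.card_pos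
  have hallU : ∀ e ∈ F, p e ∈ WU := by
    intro e he
    have hh : F.filter (fun e => p e ∈ WU) = F :=
      Finset.eq_of_subset_of_card_le (Finset.filter_subset _ _) (by omega)
    have := hh ▸ he
    exact (Finset.mem_filter.1 this).2
  have hallV : ∀ e ∈ F, q e ∈ WV := by
    intro e he
    have hh : F.filter (fun e => q e ∈ WV) = F :=
      Finset.eq_of_subset_of_card_le (Finset.filter_subset _ _) (by omega)
    have := hh ▸ he
    exact (Finset.mem_filter.1 this).2
  have hWUne : WU.Nonempty := by
    rw [← Finset.card_pos]
    omega
  set lam : (({a // a ∈ WU} → ℝ) × ({b // b ∈ WV} → ℝ)) →ₗ[ℝ] ℝ :=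
    { toFun := fun y => (∑ a, y.1 a) - (∑ b, y.2 b)
      map_add' := by
        intro y z
        simp only [Prod.fst_add, Prod.snd_add, Pi.add_apply, Finset.sum_add_distrib]
        ring
      map_smul' := by
        intro c y
        simp only [Prod.smul_fst, Prod.smul_snd, Pi.smul_apply, smul_eq_mul,
          RingHom.id_apply, ← Finset.mul_sum]
        ring } with hlam
  have hlamPhi : ∀ d : {e // e ∈ F} → ℝ, lam (Φ d) = 0 := by
    intro d
    have hU : ∑ a : {a // a ∈ WU}, (Φ d).1 a = ∑ e : {e // e ∈ F}, d e := by
      show ∑ a : {a // a ∈ WU},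
        (∑ e ∈ Finset.univ.filter (fun e : {e // e ∈ F} => p e.1 = a.1), d e) = _
      rw [Finset.univ_eq_attach (s := WU)]
      rw [Finset.sum_attach WU (fun a => ∑ e ∈ Finset.univ.filter
        (fun e : {e // e ∈ F} => p e.1 = a), d e)]
      exact Finset.sum_fiberwise_of_maps_to (fun e _ => hallU e.1 e.2) d
    have hV : ∑ b : {b // b ∈ WV}, (Φ d).2 b = ∑ e : {e // e ∈ F}, d e := by
      show ∑ b : {b // b ∈ WV},
        (∑ e ∈ Finset.univ.filter (fun e : {e // e ∈ F} => q e.1 = b.1), d e) = _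
      rw [Finset.univ_eq_attach (s := WV)]
      rw [Finset.sum_attach WV (fun b => ∑ e ∈ Finset.univ.filter
        (fun e : {e // e ∈ F} => q e.1 = b), d e)]
      exact Finset.sum_fiberwise_of_maps_to (fun e _ => hallV e.1 e.2) d
    show (∑ a, (Φ d).1 a) - (∑ b, (Φ d).2 b) = 0
    rw [hU, hV, sub_self]
  have hrange : LinearMap.range Φ ≤ LinearMap.ker lam := by
    rintro y ⟨d, rfl⟩
    exact LinearMap.mem_ker.2 (hlamPhi d)
  have hlamne : lam ≠ 0 := by
    intro h0
    have hval : lam ((fun _ => 1, fun _ => 0)) = WU.card := by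
      show (∑ _a : {a // a ∈ WU}, (1:ℝ)) - (∑ _b : {b // b ∈ WV}, (0:ℝ)) = _
      rw [Finset.sum_const, Finset.sum_const]
      simp [Fintype.card_coe]
    rw [h0] at hval
    simp only [LinearMap.zero_apply] at hval
    have : (0:ℕ) < WU.card := Finset.card_pos.2 hWUne
    have : (0:ℝ) < (WU.card : ℝ) := by exact_mod_cast this
    linarith [hval]
  have hsurj : Function.Surjective lam := LinearMap.surjective_of_ne_zero hlamne
  have hkerrank : finrank ℝ (LinearMap.ker lam) + 1 = WU.card + WV.card := by
    have h := LinearMap.finrank_range_add_finrank_ker lam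
    rw [LinearMap.range_eq_top.2 hsurj] at h
    rw [finrank_top, Module.finrank_self, hrankC] at h
    omega
  have hrk : F.card ≤ finrank ℝ (LinearMap.ker lam) := by
    have h1 : finrank ℝ (LinearMap.range Φ) = F.card := by
      rw [LinearMap.finrank_range_of_inj hinj, hrankD]
    rw [← h1]
    exact Submodule.finrank_mono hrange
  omega

set_option maxHeartbeats 1000000 in
lemma hard_dir {U V : Type*} [Fintype U] [Fintype V] (E : Finset (U × V))
    (x : {e : U × V // e ∈ E} → ℝ)
    (hx : x ∈ Set.extremePoints ℝ
      {x : {e : U × V // e ∈ E} → ℝ |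
        (∀ e, 0 ≤ x e) ∧
        (∀ i : U, ∑ e ∈ Finset.univ.filter (fun e : {e : U × V // e ∈ E} => e.1.1 = i),
          x e ≤ 1) ∧
        (∀ j : V, ∑ e ∈ Finset.univ.filter (fun e : {e : U × V // e ∈ E} => e.1.2 = j),
          x e ≤ 1)}) :
    ∃ M : Finset (U × V), IsBipMatching E M ∧
      x = fun e => if e.1 ∈ M then (1 : ℝ) else 0 := by
  classical
  obtain ⟨⟨h0, hrow, hcol⟩, hext⟩ := mem_extremePoints.1 hx
  have hle1 : ∀ e : {e : U × V // e ∈ E}, x e ≤ 1 := by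
    intro e
    refine le_trans (Finset.single_le_sum (fun f _ => h0 f) ?_) (hrow e.1.1)
    simp
  -- pair bounds
  have hpairU : ∀ e f : {e : U × V // e ∈ E}, e ≠ f → e.1.1 = f.1.1 → x e + x f ≤ 1 := by
    intro e f hne heq
    have hsub : ({e, f} : Finset {e : U × V // e ∈ E}) ⊆ Finset.univ.filter (fun g : {e : U × V // e ∈ E} => g.1.1 = e.1.1) := by
      intro g hg
      rcases Finset.mem_insert.1 hg with rfl | hg
      · simp
      · rw [Finset.mem_singleton.1 hg]
        simp [heq.symm]
    calc x e + x f = ∑ g ∈ ({e, f} : Finset {e : U × V // e ∈ E}), x g := (Finset.sum_pair hne).symm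
    _ ≤ ∑ g ∈ Finset.univ.filter (fun g : {e : U × V // e ∈ E} => g.1.1 = e.1.1), x g :=
        Finset.sum_le_sum_of_subset_of_nonneg hsub (fun g _ _ => h0 g)
    _ ≤ 1 := hrow e.1.1
  have hpairV : ∀ e f : {e : U × V // e ∈ E}, e ≠ f → e.1.2 = f.1.2 → x e + x f ≤ 1 := by
    intro e f hne heq
    have hsub : ({e, f} : Finset {e : U × V // e ∈ E}) ⊆ Finset.univ.filter (fun g : {e : U × V // e ∈ E} => g.1.2 = e.1.2) := by
      intro g hg
      rcases Finset.mem_insert.1 hg with rfl | hg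
      · simp
      · rw [Finset.mem_singleton.1 hg]
        simp [heq.symm]
    calc x e + x f = ∑ g ∈ ({e, f} : Finset {e : U × V // e ∈ E}), x g := (Finset.sum_pair hne).symm
    _ ≤ ∑ g ∈ Finset.univ.filter (fun g : {e : U × V // e ∈ E} => g.1.2 = e.1.2), x g :=
        Finset.sum_le_sum_of_subset_of_nonneg hsub (fun g _ _ => h0 g)
    _ ≤ 1 := hcol e.1.2
  -- main claim : x is 0/1
  have h01 : ∀ e : {e : U × V // e ∈ E}, x e = 0 ∨ x e = 1 := by
    by_contra hcc
    push_neg at hcc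
    obtain ⟨e0, he00, he01⟩ := hcc
    set F : Finset {e : U × V // e ∈ E} := Finset.univ.filter (fun e => x e ≠ 0 ∧ x e ≠ 1) with hFdef
    have hFne : F.Nonempty := ⟨e0, by simp [hFdef, he00, he01]⟩
    have hmemF : ∀ e : {e : U × V // e ∈ E}, e ∈ F ↔ (x e ≠ 0 ∧ x e ≠ 1) := by
      intro e; simp [hFdef]
    have hxFpos : ∀ e ∈ F, 0 < x e := fun e he =>
      lt_of_le_of_ne (h0 e) (Ne.symm ((hmemF e).1 he).1)
    have hnotF : ∀ e : {e : U × V // e ∈ E}, e ∉ F → x e = 0 ∨ x e = 1 := by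
      intro e he
      by_contra hcon2
      push_neg at hcon2
      exact he ((hmemF e).2 hcon2)
    -- tight vertices have F-degree ≠ 1
    have hdegU : ∀ i : U, (∑ e ∈ Finset.univ.filter (fun e : {e : U × V // e ∈ E} => e.1.1 = i), x e) = 1 →
        (F.filter (fun e => e.1.1 = i)).card ≠ 1 := by
      intro i hti h1
      obtain ⟨e1, he1⟩ := Finset.card_eq_one.1 h1
      have he1F : e1 ∈ F ∧ e1.1.1 = i := by
        have := he1 ▸ Finset.mem_singleton_self e1
        exact Finset.mem_filter.1 this
      have hothers : ∀ e ∈ Finset.univ.filter (fun e : {e : U × V // e ∈ E} => e.1.1 = i), e ≠ e1 → x e = 0 := by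
        intro e he hne
        have hei : e.1.1 = i := (Finset.mem_filter.1 he).2
        by_cases heF : e ∈ F
        · exfalso
          apply hne
          have : e ∈ F.filter (fun e => e.1.1 = i) := Finset.mem_filter.2 ⟨heF, hei⟩
          rw [he1] at this
          exact Finset.mem_singleton.1 this
        · rcases hnotF e heF with h | h
          · exact h
          · exfalso
            have hp := hpairU e e1 hne (hei.trans he1F.2.symm)
            have := hxFpos e1 he1F.1
            rw [h] at hp
            linarith
      have hsum : ∑ e ∈ Finset.univ.filter (fun e : {e : U × V // e ∈ E} => e.1.1 = i), x e = x e1 :=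
        Finset.sum_eq_single_of_mem e1
          (Finset.mem_filter.2 ⟨Finset.mem_univ _, he1F.2⟩) hothers
      rw [hti] at hsum
      exact ((hmemF e1).1 he1F.1).2 hsum.symm
    have hdegV : ∀ j : V, (∑ e ∈ Finset.univ.filter (fun e : {e : U × V // e ∈ E} => e.1.2 = j), x e) = 1 →
        (F.filter (fun e => e.1.2 = j)).card ≠ 1 := by
      intro j htj h1
      obtain ⟨e1, he1⟩ := Finset.card_eq_one.1 h1
      have he1F : e1 ∈ F ∧ e1.1.2 = j := by
        have := he1 ▸ Finset.mem_singleton_self e1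
        exact Finset.mem_filter.1 this
      have hothers : ∀ e ∈ Finset.univ.filter (fun e : {e : U × V // e ∈ E} => e.1.2 = j), e ≠ e1 → x e = 0 := by
        intro e he hne
        have hej : e.1.2 = j := (Finset.mem_filter.1 he).2
        by_cases heF : e ∈ F
        · exfalso
          apply hne
          have : e ∈ F.filter (fun e => e.1.2 = j) := Finset.mem_filter.2 ⟨heF, hej⟩
          rw [he1] at this
          exact Finset.mem_singleton.1 this
        · rcases hnotF e heF with h | h
          · exact h
          · exfalso
            have hp := hpairV e e1 hne (hej.trans he1F.2.symm)
            have := hxFpos e1 he1F.1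
            rw [h] at hp
            linarith
      have hsum : ∑ e ∈ Finset.univ.filter (fun e : {e : U × V // e ∈ E} => e.1.2 = j), x e = x e1 :=
        Finset.sum_eq_single_of_mem e1
          (Finset.mem_filter.2 ⟨Finset.mem_univ _, he1F.2⟩) hothers
      rw [htj] at hsum
      exact ((hmemF e1).1 he1F.1).2 hsum.symm
    -- the perturbation direction
    set WU : Finset U := Finset.univ.filter (fun i =>
      (∑ e ∈ Finset.univ.filter (fun e : {e : U × V // e ∈ E} => e.1.1 = i), x e) = 1 ∧
      2 ≤ (F.filter (fun e => e.1.1 = i)).card) with hWUdef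
    set WV : Finset V := Finset.univ.filter (fun j =>
      (∑ e ∈ Finset.univ.filter (fun e : {e : U × V // e ∈ E} => e.1.2 = j), x e) = 1 ∧
      2 ≤ (F.filter (fun e => e.1.2 = j)).card) with hWVdef
    obtain ⟨d, hdne, hdsupp, hdU, hdV⟩ :=
      exists_kernel_vec (fun e : {e : U × V // e ∈ E} => e.1.1) (fun e : {e : U × V // e ∈ E} => e.1.2) F hFne WU WV
        (fun i hi => ((Finset.mem_filter.1 hi).2.2))
        (fun j hj => ((Finset.mem_filter.1 hj).2.2))
    have hdrow : ∀ i : U, (∑ e ∈ Finset.univ.filter (fun e : {e : U × V // e ∈ E} => e.1.1 = i), x e) = 1 →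
        ∑ e ∈ Finset.univ.filter (fun e : {e : U × V // e ∈ E} => e.1.1 = i), d e = 0 := by
      intro i hti
      have hred : ∑ e ∈ Finset.univ.filter (fun e : {e : U × V // e ∈ E} => e.1.1 = i), d e
          = ∑ e ∈ F.filter (fun e => e.1.1 = i), d e := by
        symm
        apply Finset.sum_subset
        · intro f hf
          exact Finset.mem_filter.2 ⟨Finset.mem_univ _, (Finset.mem_filter.1 hf).2⟩
        · intro f hf hnf
          apply hdsupp
          intro hfF
          exact hnf (Finset.mem_filter.2 ⟨hfF, (Finset.mem_filter.1 hf).2⟩)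
      rw [hred]
      by_cases hdeg : 2 ≤ (F.filter (fun e => e.1.1 = i)).card
      · exact hdU i (Finset.mem_filter.2 ⟨Finset.mem_univ _, hti, hdeg⟩)
      · have h1 : F.filter (fun e => e.1.1 = i) = ∅ := by
          apply Finset.card_eq_zero.1
          have := hdegU i hti
          omega
        rw [h1, Finset.sum_empty]
    have hdcol : ∀ j : V, (∑ e ∈ Finset.univ.filter (fun e : {e : U × V // e ∈ E} => e.1.2 = j), x e) = 1 →
        ∑ e ∈ Finset.univ.filter (fun e : {e : U × V // e ∈ E} => e.1.2 = j), d e = 0 := by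
      intro j htj
      have hred : ∑ e ∈ Finset.univ.filter (fun e : {e : U × V // e ∈ E} => e.1.2 = j), d e
          = ∑ e ∈ F.filter (fun e => e.1.2 = j), d e := by
        symm
        apply Finset.sum_subset
        · intro f hf
          exact Finset.mem_filter.2 ⟨Finset.mem_univ _, (Finset.mem_filter.1 hf).2⟩
        · intro f hf hnf
          apply hdsupp
          intro hfF
          exact hnf (Finset.mem_filter.2 ⟨hfF, (Finset.mem_filter.1 hf).2⟩)
      rw [hred]
      by_cases hdeg : 2 ≤ (F.filter (fun e => e.1.2 = j)).card
      · exact hdV j (Finset.mem_filter.2 ⟨Finset.mem_univ _, htj, hdeg⟩)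
      · have h1 : F.filter (fun e => e.1.2 = j) = ∅ := by
          apply Finset.card_eq_zero.1
          have := hdegV j htj
          omega
        rw [h1, Finset.sum_empty]
    -- choose epsilon
    obtain ⟨ε1, hε1, hε1h⟩ := exists_eps F (fun e => |d e|) (fun e => x e) hxFpos
    obtain ⟨ε2, hε2, hε2h⟩ := exists_eps
      (Finset.univ.filter (fun i : U =>
        (∑ e ∈ Finset.univ.filter (fun e : {e : U × V // e ∈ E} => e.1.1 = i), x e) ≠ 1))
      (fun i => |∑ e ∈ Finset.univ.filter (fun e : {e : U × V // e ∈ E} => e.1.1 = i), d e|)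
      (fun i => 1 - ∑ e ∈ Finset.univ.filter (fun e : {e : U × V // e ∈ E} => e.1.1 = i), x e)
      (fun i hi => by
        show (0:ℝ) < 1 - ∑ e ∈ Finset.univ.filter (fun e : {e : U × V // e ∈ E} => e.1.1 = i), x e
        have h1 := hrow i
        have h2 := (Finset.mem_filter.1 hi).2
        have := lt_of_le_of_ne h1 h2
        linarith)
    obtain ⟨ε3, hε3, hε3h⟩ := exists_eps
      (Finset.univ.filter (fun j : V =>
        (∑ e ∈ Finset.univ.filter (fun e : {e : U × V // e ∈ E} => e.1.2 = j), x e) ≠ 1))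
      (fun j => |∑ e ∈ Finset.univ.filter (fun e : {e : U × V // e ∈ E} => e.1.2 = j), d e|)
      (fun j => 1 - ∑ e ∈ Finset.univ.filter (fun e : {e : U × V // e ∈ E} => e.1.2 = j), x e)
      (fun j hj => by
        show (0:ℝ) < 1 - ∑ e ∈ Finset.univ.filter (fun e : {e : U × V // e ∈ E} => e.1.2 = j), x e
        have h1 := hcol j
        have h2 := (Finset.mem_filter.1 hj).2
        have := lt_of_le_of_ne h1 h2
        linarith)
    set ε : ℝ := min ε1 (min ε2 ε3) with hεdef
    have hεpos : 0 < ε := lt_min hε1 (lt_min hε2 hε3)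
    have hεle1 : ε ≤ ε1 := min_le_left _ _
    have hεle2 : ε ≤ ε2 := le_trans (min_le_right _ _) (min_le_left _ _)
    have hεle3 : ε ≤ ε3 := le_trans (min_le_right _ _) (min_le_right _ _)
    -- membership of perturbed points
    have hmem : ∀ σ : ℝ, |σ| ≤ ε → (fun e => x e + σ * d e) ∈
        {x : {e : U × V // e ∈ E} → ℝ |
          (∀ e, 0 ≤ x e) ∧
          (∀ i : U, ∑ e ∈ Finset.univ.filter (fun e : {e : U × V // e ∈ E} => e.1.1 = i), x e ≤ 1) ∧
          (∀ j : V, ∑ e ∈ Finset.univ.filter (fun e : {e : U × V // e ∈ E} => e.1.2 = j), x e ≤ 1)} := by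
      intro σ hσ
      refine ⟨?_, ?_, ?_⟩
      · intro e
        show 0 ≤ x e + σ * d e
        by_cases heF : e ∈ F
        · have h1 : |σ * d e| ≤ ε * |d e| := by
            rw [abs_mul]
            exact mul_le_mul_of_nonneg_right hσ (abs_nonneg _)
          have h2 : ε * |d e| ≤ ε1 * |d e| :=
            mul_le_mul_of_nonneg_right hεle1 (abs_nonneg _)
          have h3 := hε1h e heF
          have h4 := neg_abs_le (σ * d e)
          linarith
        · rw [hdsupp e heF, mul_zero, add_zero]
          exact h0 e
      · intro i
        show ∑ e ∈ Finset.univ.filter (fun e : {e : U × V // e ∈ E} => e.1.1 = i), (x e + σ * d e) ≤ 1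
        rw [Finset.sum_add_distrib, ← Finset.mul_sum]
        by_cases hti : (∑ e ∈ Finset.univ.filter (fun e : {e : U × V // e ∈ E} => e.1.1 = i), x e) = 1
        · rw [hdrow i hti, mul_zero, add_zero, hti]
        · have hi : i ∈ Finset.univ.filter (fun i : U =>
              (∑ e ∈ Finset.univ.filter (fun e : {e : U × V // e ∈ E} => e.1.1 = i), x e) ≠ 1) :=
            Finset.mem_filter.2 ⟨Finset.mem_univ _, hti⟩
          have h2 := hε2h i hi
          have h1 : σ * (∑ e ∈ Finset.univ.filter (fun e : {e : U × V // e ∈ E} => e.1.1 = i), d e)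
              ≤ ε2 * |∑ e ∈ Finset.univ.filter (fun e : {e : U × V // e ∈ E} => e.1.1 = i), d e| := by
            calc σ * _ ≤ |σ * _| := le_abs_self _
            _ = |σ| * |_| := abs_mul _ _
            _ ≤ ε2 * |_| := mul_le_mul_of_nonneg_right (le_trans hσ hεle2) (abs_nonneg _)
          linarith
      · intro j
        show ∑ e ∈ Finset.univ.filter (fun e : {e : U × V // e ∈ E} => e.1.2 = j), (x e + σ * d e) ≤ 1
        rw [Finset.sum_add_distrib, ← Finset.mul_sum]
        by_cases htj : (∑ e ∈ Finset.univ.filter (fun e : {e : U × V // e ∈ E} => e.1.2 = j), x e) = 1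
        · rw [hdcol j htj, mul_zero, add_zero, htj]
        · have hj : j ∈ Finset.univ.filter (fun j : V =>
              (∑ e ∈ Finset.univ.filter (fun e : {e : U × V // e ∈ E} => e.1.2 = j), x e) ≠ 1) :=
            Finset.mem_filter.2 ⟨Finset.mem_univ _, htj⟩
          have h2 := hε3h j hj
          have h1 : σ * (∑ e ∈ Finset.univ.filter (fun e : {e : U × V // e ∈ E} => e.1.2 = j), d e)
              ≤ ε3 * |∑ e ∈ Finset.univ.filter (fun e : {e : U × V // e ∈ E} => e.1.2 = j), d e| := by
            calc σ * _ ≤ |σ * _| := le_abs_self _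
            _ = |σ| * |_| := abs_mul _ _
            _ ≤ ε3 * |_| := mul_le_mul_of_nonneg_right (le_trans hσ hεle3) (abs_nonneg _)
          linarith
    have hy := hmem (-ε) (by rw [abs_neg, abs_of_pos hεpos])
    have hz := hmem ε (by rw [abs_of_pos hεpos])
    have hseg : x ∈ openSegment ℝ (fun e => x e + (-ε) * d e) (fun e => x e + ε * d e) := by
      refine ⟨1/2, 1/2, by norm_num, by norm_num, by norm_num, ?_⟩
      funext e
      simp only [Pi.add_apply, Pi.smul_apply, smul_eq_mul]
      ring
    have hzx := (hext _ hy _ hz hseg).2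
    obtain ⟨e, hde⟩ := Function.ne_iff.1 hdne
    have := congrFun hzx e
    have : ε * d e = 0 := by linarith [this]
    rcases mul_eq_zero.1 this with h | h
    · exact absurd h (ne_of_gt hεpos)
    · exact hde h
  -- now build the matching
  set M : Finset (U × V) :=
    Finset.image (fun e : {e : U × V // e ∈ E} => e.1) (Finset.univ.filter (fun e => x e = 1)) with hMdef
  have hmemM : ∀ e : {e : U × V // e ∈ E}, e.1 ∈ M ↔ x e = 1 := by
    intro e
    rw [hMdef]
    simp only [Finset.mem_image, Finset.mem_filter, Finset.mem_univ, true_and]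
    constructor
    · rintro ⟨f, hf, hfe⟩
      rwa [Subtype.ext hfe] at hf
    · intro h
      exact ⟨e, h, rfl⟩
  refine ⟨M, ⟨?_, ?_⟩, ?_⟩
  · intro a ha
    rw [hMdef] at ha
    obtain ⟨f, _, rfl⟩ := Finset.mem_image.1 ha
    exact f.2
  · intro a ha b hb hab
    rw [hMdef] at ha hb
    obtain ⟨f, hf, rfl⟩ := Finset.mem_image.1 ha
    obtain ⟨g, hg, rfl⟩ := Finset.mem_image.1 hb
    have hf1 : x f = 1 := (Finset.mem_filter.1 hf).2
    have hg1 : x g = 1 := (Finset.mem_filter.1 hg).2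
    have hfg : f ≠ g := fun h => hab (congrArg _ h)
    constructor
    · intro heq
      have := hpairU f g hfg heq
      rw [hf1, hg1] at this
      linarith
    · intro heq
      have := hpairV f g hfg heq
      rw [hf1, hg1] at this
      linarith
  · funext e
    by_cases h : x e = 1
    · rw [if_pos ((hmemM e).2 h)]
      exact h
    · have h0' : x e = 0 := (h01 e).resolve_right h
      rw [if_neg (fun hm => h ((hmemM e).1 hm))]
      exact h0'

-- easy direction: indicator of a matching is an extreme point
lemma easy_dir {U V : Type*} [Fintype U] [Fintype V] (E : Finset (U × V))
    (M : Finset (U × V)) (hM : IsBipMatching E M) :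
    (fun e : {e : U × V // e ∈ E} => if e.1 ∈ M then (1:ℝ) else 0) ∈
    Set.extremePoints ℝ
      {x : {e : U × V // e ∈ E} → ℝ |
        (∀ e, 0 ≤ x e) ∧
        (∀ i : U, ∑ e ∈ Finset.univ.filter (fun e : {e : U × V // e ∈ E} => e.1.1 = i),
          x e ≤ 1) ∧
        (∀ j : V, ∑ e ∈ Finset.univ.filter (fun e : {e : U × V // e ∈ E} => e.1.2 = j),
          x e ≤ 1)} := by
  classical
  set ι := {e : U × V // e ∈ E}
  set x : ι → ℝ := fun e => if e.1 ∈ M then (1:ℝ) else 0 with hxdef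
  have hrow : ∀ i : U, ∑ e ∈ Finset.univ.filter (fun e : ι => e.1.1 = i), x e ≤ 1 := by
    intro i
    have h1 : ∑ e ∈ Finset.univ.filter (fun e : ι => e.1.1 = i), x e
        = ((Finset.univ.filter (fun e : ι => e.1.1 = i)).filter (fun e => e.1 ∈ M)).card := by
      rw [hxdef]
      rw [Finset.sum_boole]
    rw [h1]
    have hle : ((Finset.univ.filter (fun e : ι => e.1.1 = i)).filter (fun e => e.1 ∈ M)).card ≤ 1 := by
      rw [Finset.card_le_one]
      intro e he f hf
      simp only [Finset.mem_filter] at he hf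
      by_contra hne
      have hne' : e.1 ≠ f.1 := fun h => hne (Subtype.ext h)
      have := (hM.2 e.1 he.2 f.1 hf.2 hne').1
      exact this (he.1.2.trans hf.1.2.symm)
    exact_mod_cast hle
  have hcol : ∀ j : V, ∑ e ∈ Finset.univ.filter (fun e : ι => e.1.2 = j), x e ≤ 1 := by
    intro j
    have h1 : ∑ e ∈ Finset.univ.filter (fun e : ι => e.1.2 = j), x e
        = ((Finset.univ.filter (fun e : ι => e.1.2 = j)).filter (fun e => e.1 ∈ M)).card := by
      rw [hxdef]
      rw [Finset.sum_boole]
    rw [h1]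
    have hle : ((Finset.univ.filter (fun e : ι => e.1.2 = j)).filter (fun e => e.1 ∈ M)).card ≤ 1 := by
      rw [Finset.card_le_one]
      intro e he f hf
      simp only [Finset.mem_filter] at he hf
      by_contra hne
      have hne' : e.1 ≠ f.1 := fun h => hne (Subtype.ext h)
      have := (hM.2 e.1 he.2 f.1 hf.2 hne').2
      exact this (he.1.2.trans hf.1.2.symm)
    exact_mod_cast hle
  have hx0 : ∀ e, 0 ≤ x e := by
    intro e; rw [hxdef]; dsimp only; split <;> norm_num
  rw [mem_extremePoints]
  refine ⟨⟨hx0, hrow, hcol⟩, ?_⟩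
  rintro y ⟨hy0, hyrow, _⟩ z ⟨hz0, hzrow, _⟩ ⟨a, b, ha, hb, hab, hsum⟩
  have hy1 : ∀ e : ι, y e ≤ 1 := by
    intro e
    refine le_trans (Finset.single_le_sum (fun f _ => hy0 f) ?_) (hyrow e.1.1)
    simp
  have hz1 : ∀ e : ι, z e ≤ 1 := by
    intro e
    refine le_trans (Finset.single_le_sum (fun f _ => hz0 f) ?_) (hzrow e.1.1)
    simp
  have key : ∀ e : ι, y e = x e ∧ z e = x e := by
    intro e
    have he : a * y e + b * z e = x e := congrFun hsum e
    by_cases hm : e.1 ∈ M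
    · have hx1 : x e = 1 := by rw [hxdef]; simp [hm]
      rw [hx1] at he ⊢
      have h1 : b * z e ≤ b := by nlinarith [hz1 e]
      have h2 : a * y e ≤ a := by nlinarith [hy1 e]
      have hy : y e = 1 := by nlinarith [hy1 e]
      have hz : z e = 1 := by nlinarith [hz1 e]
      exact ⟨hy, hz⟩
    · have hx1 : x e = 0 := by rw [hxdef]; simp [hm]
      rw [hx1] at he ⊢
      have h1 : a * y e = 0 := by nlinarith [hy0 e, hz0 e, mul_nonneg ha.le (hy0 e), mul_nonneg hb.le (hz0 e)]
      have h2 : b * z e = 0 := by nlinarith [hy0 e, hz0 e, mul_nonneg ha.le (hy0 e), mul_nonneg hb.le (hz0 e)]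
      constructor
      · rcases mul_eq_zero.1 h1 with h | h
        · exact absurd h (ne_of_gt ha)
        · exact h
      · rcases mul_eq_zero.1 h2 with h | h
        · exact absurd h (ne_of_gt hb)
        · exact h
  constructor
  · funext e; exact (key e).1
  · funext e; exact (key e).2

theorem birkhoff_extreme_points_are_matchings
    {U V : Type*} [Fintype U] [Fintype V] (E : Finset (U × V)) :
    Set.extremePoints ℝ
      {x : {e : U × V // e ∈ E} → ℝ |
        (∀ e, 0 ≤ x e) ∧
        (∀ i : U, ∑ e ∈ Finset.univ.filter (fun e : {e : U × V // e ∈ E} => e.1.1 = i),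
          x e ≤ 1) ∧
        (∀ j : V, ∑ e ∈ Finset.univ.filter (fun e : {e : U × V // e ∈ E} => e.1.2 = j),
          x e ≤ 1)}
    =
    {x : {e : U × V // e ∈ E} → ℝ | ∃ M : Finset (U × V), IsBipMatching E M ∧
      x = fun e => if e.1 ∈ M then (1 : ℝ) else 0} := by
  ext x
  constructor
  · intro h
    exact hard_dir E x h
  · rintro ⟨M, hM, rfl⟩
    exact easy_dir E M hM
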